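/- For each of the types R_N ∈ {C_N, C_N^∨, BC_N}, for all j, k ∈ {1,…,N} and every y ∈ ℝ, ∫₀^L conj(M_j(x+iy)) M_k(x+iy) dx = δ_{jk} · L { e^{4πJ(j)y/L} θ₂(2(J(j)τ − i𝒩y/L); 2𝒩τ) + e^{−4πJ(j)y/L} θ₂(2(J(j)τ + i𝒩y/L); 2𝒩τ) }. -/

import Mathlib

open Complex MeasureTheory
open scoped Real ComplexConjugate

noncomputable section

/-- The Jacobi theta function θ₀. -/
def jtheta0 (v τ : ℂ) : ℂ :=
  ∑' n : ℤ, (-1 : ℂ) ^ n * Complex.exp (π * I * τ * (n : ℂ) ^ 2) *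
    Complex.exp (2 * π * I * (n : ℂ) * v)

/-- The Jacobi theta function θ₁. -/
def jtheta1 (v τ : ℂ) : ℂ :=
  I * ∑' n : ℤ, (-1 : ℂ) ^ n * Complex.exp (π * I * τ * ((n : ℂ) - 1 / 2) ^ 2) *
    Complex.exp ((2 * (n : ℂ) - 1) * π * I * v)

/-- The Jacobi theta function θ₂. -/
def jtheta2 (v τ : ℂ) : ℂ :=
  ∑' n : ℤ, Complex.exp (π * I * τ * ((n : ℂ) - 1 / 2) ^ 2) *
    Complex.exp ((2 * (n : ℂ) - 1) * π * I * v)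

/-- The Jacobi theta function θ₃. -/
def jtheta3 (v τ : ℂ) : ℂ :=
  ∑' n : ℤ, Complex.exp (π * I * τ * (n : ℂ) ^ 2) * Complex.exp (2 * π * I * (n : ℂ) * v)

/-- Dedekind's eta function. -/
def dedekindEta (τ : ℂ) : ℂ :=
  Complex.exp (π * I * τ / 12) * ∏' n : ℕ, (1 - Complex.exp (2 * π * I * ((n : ℂ) + 1) * τ))

/-- For types C_N, C_N^∨, BC_N:
M_j(z) = e^{2πiJz/L} θ₂(Jτ + 𝒩z/L; 𝒩τ) − e^{−2πiJz/L} θ₂(Jτ − 𝒩z/L; 𝒩τ), τ = iW/L. -/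
def MC (nn : ℕ) (L W : ℝ) (Jj : ℝ) (z : ℂ) : ℂ :=
  Complex.exp (2 * π * I * Jj * z / L) *
      jtheta2 ((Jj : ℂ) * (I * W / L) + nn * z / L) (nn * (I * W / L)) -
    Complex.exp (-(2 * π * I * Jj * z / L)) *
      jtheta2 ((Jj : ℂ) * (I * W / L) - nn * z / L) (nn * (I * W / L))

/-- The right-hand side L { e^{4πJy/L} θ₂(2(Jτ − i𝒩y/L); 2𝒩τ) + e^{−4πJy/L} θ₂(2(Jτ + i𝒩y/L); 2𝒩τ) }. -/
def mRHS (nn : ℕ) (L W : ℝ) (Jj y : ℝ) : ℂ :=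
  (L : ℂ) *
    (Complex.exp (4 * π * Jj * y / L) *
        jtheta2 (2 * ((Jj : ℂ) * (I * W / L) - I * nn * y / L)) (2 * nn * (I * W / L)) +
      Complex.exp (-(4 * π * Jj * y / L)) *
        jtheta2 (2 * ((Jj : ℂ) * (I * W / L) + I * nn * y / L)) (2 * nn * (I * W / L)))

/-- unit complex exponential of a real angle -/
def st3e (a : ℝ) : ℂ := Complex.exp (a * I)

lemma st3e_norm (a : ℝ) : ‖st3e a‖ = 1 := Complex.norm_exp_ofReal_mul_I a

lemma st3e_add (a b : ℝ) : st3e a * st3e b = st3e (a + b) := by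
  rw [st3e, st3e, st3e, ← Complex.exp_add]
  congr 1
  push_cast
  ring

lemma st3e_star (a : ℝ) : star (st3e a) = st3e (-a) := by
  rw [st3e, st3e]
  rw [show star (Complex.exp (↑a * I)) = (starRingEnd ℂ) (Complex.exp (↑a * I)) from rfl,
    ← Complex.exp_conj]
  congr 1
  simp [map_mul, Complex.conj_ofReal]

lemma st3e_continuous (c : ℝ) : Continuous fun x : ℝ => st3e (c * x) := by
  unfold st3e
  fun_prop

/-- normalized coefficient -/
def st3cP (c u : ℝ) (n : ℤ) : ℝ := Real.exp (-c * ((n:ℝ)-1/2)^2 + u * (2*(n:ℝ)-1))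

lemma st3cP_pos (c u : ℝ) (n : ℤ) : 0 < st3cP c u n := Real.exp_pos _

lemma st3_summable_q {c : ℝ} (hc : 0 < c) (b : ℝ) :
    Summable fun n : ℤ => Real.exp (-c*(n:ℝ)^2 + b*(n:ℝ)) := by
  have hπ := Real.pi_pos
  refine (summable_pow_mul_jacobiTheta₂_term_bound (|b|/(2*π)) (T := c/π)
    (by positivity) 0).of_nonneg_of_le (fun n => (Real.exp_pos _).le) (fun n => ?_)
  simp only [pow_zero, one_mul]
  apply Real.exp_le_exp.mpr
  have h1 : b*(n:ℝ) ≤ |b| * |(n:ℝ)| := by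
    calc b*(n:ℝ) ≤ |b*(n:ℝ)| := le_abs_self _
    _ = |b| * |(n:ℝ)| := abs_mul _ _
  have h2 : -π * (c/π * (n:ℝ)^2 - 2 * (|b|/(2*π)) * |(n:ℤ)|) = -c*(n:ℝ)^2 + |b| * |(n:ℝ)| := by
    push_cast
    field_simp
    ring
  rw [h2]
  linarith

lemma st3_summable_cP {c : ℝ} (hc : 0 < c) (u : ℝ) : Summable (st3cP c u) := by
  refine ((st3_summable_q hc (c + 2*u)).mul_right (Real.exp (-c/4 - u))).congr fun n => ?_
  rw [← Real.exp_add, st3cP]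
  congr 1
  ring

/-- the basic exponential sums -/
def st3S (g : ℤ → ℝ) (μ : ℤ → ℝ) (L : ℝ) (x : ℝ) : ℂ :=
  ∑' n : ℤ, (g n : ℂ) * st3e (2*π*(μ n)*x/L)

lemma st3_integral_e {L : ℝ} (hL : 0 < L) (d : ℤ) :
    ∫ x in (0:ℝ)..L, st3e (2*π*d*x/L) = if d = 0 then (L:ℂ) else 0 := by
  rcases eq_or_ne d 0 with h | h
  · simp only [h, if_pos]
    simp [st3e]
  · rw [if_neg h]
    have hL' : (L:ℂ) ≠ 0 := by exact_mod_cast hL.ne'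
    have hd : (d:ℂ) ≠ 0 := by exact_mod_cast h
    have hπ : (π:ℂ) ≠ 0 := by exact_mod_cast Real.pi_ne_zero
    have hc : (2*π*I*d/L : ℂ) ≠ 0 := by
      simp [hL', hd, hπ, Complex.I_ne_zero]
    have h1 : ∀ x : ℝ, st3e (2*π*d*x/L) = Complex.exp ((2*π*I*d/L) * x) := by
      intro x
      rw [st3e]
      congr 1
      push_cast
      ring
    rw [intervalIntegral.integral_congr (fun x _ => h1 x),
      integral_exp_mul_complex hc]
    have h2 : (2*π*I*(d:ℂ)/L) * L = d * (2*π*I) := by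
      field_simp
    rw [h2, Complex.exp_int_mul_two_pi_mul_I]
    simp

lemma st3_norm_coef (w : ℤ → ℝ) (hw : ∀ n, 0 ≤ w n) (θ : ℤ → ℝ) :
    (fun n => ‖(w n : ℂ) * st3e (θ n)‖) = w := by
  funext n
  rw [norm_mul, st3e_norm, mul_one, Complex.norm_real, Real.norm_eq_abs,
    _root_.abs_of_nonneg (hw n)]

lemma st3_cont (g : ℤ → ℝ) (hg : Summable g) (hgpos : ∀ n, 0 ≤ g n) (μ : ℤ → ℝ) (L : ℝ) :
    Continuous fun x : ℝ => st3S g μ L x := by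
  unfold st3S
  apply continuous_tsum ?_ hg ?_
  · intro n
    have : (fun x : ℝ => (g n : ℂ) * st3e (2*π*(μ n)*x/L))
        = fun x => (g n : ℂ) * st3e ((2*π*(μ n)/L)*x) := by
      funext x; congr 1; ring
    rw [this]
    exact continuous_const.mul (st3e_continuous _)
  · intro n x
    rw [norm_mul, st3e_norm, mul_one, Complex.norm_real, Real.norm_eq_abs,
      _root_.abs_of_nonneg (hgpos n)]

lemma st3_key {L : ℝ} (hL : 0 < L) (g h : ℤ → ℝ) (μ ν : ℤ → ℝ)
    (hg : Summable g) (hh : Summable h) (hgpos : ∀ n, 0 ≤ g n) (hhpos : ∀ n, 0 ≤ h n)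
    (hint : ∀ n m : ℤ, ∃ d : ℤ, ν m - μ n = (d:ℝ)) :
    (∫ x in (0:ℝ)..L, (starRingEnd ℂ) (st3S g μ L x) * st3S h ν L x)
      = L * ∑' p : ℤ × ℤ, (if μ p.1 = ν p.2 then ((g p.1 * h p.2 : ℝ) : ℂ) else 0) := by
  unfold st3S
  have hs1 : ∀ x : ℝ, Summable fun n : ℤ => ‖(g n : ℂ) * st3e (-(2*π*(μ n)*x/L))‖ := by
    intro x; rw [st3_norm_coef g hgpos]; exact hg
  have hs2 : ∀ x : ℝ, Summable fun m : ℤ => ‖(h m : ℂ) * st3e (2*π*(ν m)*x/L)‖ := by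
    intro x; rw [st3_norm_coef h hhpos]; exact hh
  have hfun : ∀ x : ℝ,
      (starRingEnd ℂ) (∑' n : ℤ, (g n : ℂ) * st3e (2*π*(μ n)*x/L)) *
        (∑' m : ℤ, (h m : ℂ) * st3e (2*π*(ν m)*x/L))
      = ∑' p : ℤ × ℤ, ((g p.1 * h p.2 : ℝ) : ℂ) * st3e (2*π*(ν p.2 - μ p.1)*x/L) := by
    intro x
    rw [show (starRingEnd ℂ) (∑' n : ℤ, (g n : ℂ) * st3e (2*π*(μ n)*x/L))
        = star (∑' n : ℤ, (g n : ℂ) * st3e (2*π*(μ n)*x/L)) from rfl, tsum_star]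
    have e1 : (fun n : ℤ => star ((g n : ℂ) * st3e (2*π*(μ n)*x/L)))
        = fun n : ℤ => (g n : ℂ) * st3e (-(2*π*(μ n)*x/L)) := by
      funext n
      rw [star_mul', st3e_star]
      congr 1
      exact Complex.conj_ofReal _
    rw [e1, tsum_mul_tsum_of_summable_norm (hs1 x) (hs2 x)]
    apply tsum_congr
    intro p
    rw [mul_mul_mul_comm, st3e_add, ← Complex.ofReal_mul]
    congr 1
    ring
  rw [intervalIntegral.integral_of_le hL.le]
  simp only [hfun]
  have hcont : ∀ p : ℤ × ℤ, Continuous fun x : ℝ =>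
      ((g p.1 * h p.2 : ℝ) : ℂ) * st3e (2*π*(ν p.2 - μ p.1)*x/L) := by
    intro p
    have : (fun x : ℝ => ((g p.1 * h p.2 : ℝ) : ℂ) * st3e (2*π*(ν p.2 - μ p.1)*x/L))
        = fun x : ℝ => ((g p.1 * h p.2 : ℝ) : ℂ) * st3e ((2*π*(ν p.2 - μ p.1)/L)*x) := by
      funext x; congr 1; ring
    rw [this]
    exact continuous_const.mul (st3e_continuous _)
  have hInt : ∀ p : ℤ × ℤ, Integrable (fun x : ℝ =>
      ((g p.1 * h p.2 : ℝ) : ℂ) * st3e (2*π*(ν p.2 - μ p.1)*x/L))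
      (volume.restrict (Set.Ioc (0:ℝ) L)) := by
    intro p
    exact (hcont p).integrableOn_Ioc
  have hVol : (volume (Set.Ioc (0:ℝ) L)).toReal = L := by
    rw [Real.volume_Ioc]
    simp [hL.le]
  have hIntNorm : ∀ p : ℤ × ℤ, (∫ x in Set.Ioc (0:ℝ) L,
      ‖((g p.1 * h p.2 : ℝ) : ℂ) * st3e (2*π*(ν p.2 - μ p.1)*x/L)‖) = g p.1 * h p.2 * L := by
    intro p
    have : ∀ x : ℝ, ‖((g p.1 * h p.2 : ℝ) : ℂ) * st3e (2*π*(ν p.2 - μ p.1)*x/L)‖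
        = g p.1 * h p.2 := by
      intro x
      rw [norm_mul, st3e_norm, mul_one, Complex.norm_real, Real.norm_eq_abs,
        _root_.abs_of_nonneg (mul_nonneg (hgpos _) (hhpos _))]
    simp only [this]
    rw [setIntegral_const, measureReal_def, hVol, smul_eq_mul, mul_comm]
  have hSum : Summable fun p : ℤ × ℤ => (∫ x in Set.Ioc (0:ℝ) L,
      ‖((g p.1 * h p.2 : ℝ) : ℂ) * st3e (2*π*(ν p.2 - μ p.1)*x/L)‖) := by
    simp only [hIntNorm]
    exact (hg.mul_of_nonneg hh hgpos hhpos).mul_right L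
  rw [← integral_tsum_of_summable_integral_norm hInt hSum]
  have hterm : ∀ p : ℤ × ℤ, (∫ x in Set.Ioc (0:ℝ) L,
      ((g p.1 * h p.2 : ℝ) : ℂ) * st3e (2*π*(ν p.2 - μ p.1)*x/L))
      = (L:ℂ) * (if μ p.1 = ν p.2 then ((g p.1 * h p.2 : ℝ) : ℂ) else 0) := by
    intro p
    obtain ⟨d, hd⟩ := hint p.1 p.2
    rw [← intervalIntegral.integral_of_le hL.le, intervalIntegral.integral_const_mul, hd,
      st3_integral_e hL d]
    have hiff : μ p.1 = ν p.2 ↔ d = 0 := by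
      rw [show (d = 0) ↔ ((d:ℝ) = 0) from Iff.symm Int.cast_eq_zero, ← hd, sub_eq_zero, eq_comm]
    by_cases hc : d = 0
    · rw [if_pos hc, if_pos (hiff.mpr hc), mul_comm]
    · rw [if_neg hc, if_neg (fun hh' => hc (hiff.mp hh')), mul_zero, mul_zero]
  simp only [hterm]
  exact tsum_mul_left

def st3fq (nn : ℕ) (J : ℝ) (n : ℤ) : ℝ := J + (2*(n:ℝ)-1)*nn/2

def st3gp (nn : ℕ) (L W J y : ℝ) (n : ℤ) : ℝ :=
  Real.exp (-(2*π*J*y/L)) * st3cP (π*nn*(W/L)) (-(π*J*(W/L)) - π*nn*y/L) n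

def st3gm (nn : ℕ) (L W J y : ℝ) (n : ℤ) : ℝ :=
  Real.exp (2*π*J*y/L) * st3cP (π*nn*(W/L)) (-(π*J*(W/L)) + π*nn*y/L) n

lemma st3gp_nonneg (nn : ℕ) (L W J y : ℝ) : ∀ n, 0 ≤ st3gp nn L W J y n :=
  fun n => (mul_pos (Real.exp_pos _) (st3cP_pos _ _ n)).le

lemma st3gm_nonneg (nn : ℕ) (L W J y : ℝ) : ∀ n, 0 ≤ st3gm nn L W J y n :=
  fun n => (mul_pos (Real.exp_pos _) (st3cP_pos _ _ n)).le

lemma st3_summable_gp (nn : ℕ) {L W : ℝ} (hL : 0 < L) (hW : 0 < W) (hnn : 0 < (nn:ℝ))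
    (J y : ℝ) : Summable (st3gp nn L W J y) := by
  have hc : 0 < π*nn*(W/L) := mul_pos (mul_pos Real.pi_pos hnn) (div_pos hW hL)
  exact (st3_summable_cP hc _).mul_left _

lemma st3_summable_gm (nn : ℕ) {L W : ℝ} (hL : 0 < L) (hW : 0 < W) (hnn : 0 < (nn:ℝ))
    (J y : ℝ) : Summable (st3gm nn L W J y) := by
  have hc : 0 < π*nn*(W/L) := mul_pos (mul_pos Real.pi_pos hnn) (div_pos hW hL)
  exact (st3_summable_cP hc _).mul_left _

lemma st3_MC_eq (nn : ℕ) {L W : ℝ} (hL : 0 < L) (J y x : ℝ) :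
    MC nn L W J (x + I*y)
      = st3S (st3gp nn L W J y) (st3fq nn J) L x
        - st3S (st3gm nn L W J y) (fun n => -(st3fq nn J n)) L x := by
  rw [MC, jtheta2, jtheta2, ← tsum_mul_left, ← tsum_mul_left]
  unfold st3S st3gp st3gm
  congr 1
  · apply tsum_congr
    intro n
    rw [Complex.ofReal_mul, Complex.ofReal_exp, st3cP, Complex.ofReal_exp, st3e, st3fq,
      ← mul_assoc, ← Complex.exp_add, ← Complex.exp_add, ← Complex.exp_add, ← Complex.exp_add]
    congr 1
    push_cast
    linear_combination (2*π*J*y/L + π*nn*(W/L)*((n:ℂ)-1/2)^2 + (2*(n:ℂ)-1)*π*J*(W/L)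
      + (2*(n:ℂ)-1)*π*nn*y/L) * Complex.I_sq
  · apply tsum_congr
    intro n
    simp only [st3fq]
    rw [Complex.ofReal_mul, Complex.ofReal_exp, st3cP, Complex.ofReal_exp, st3e,
      ← mul_assoc, ← Complex.exp_add, ← Complex.exp_add, ← Complex.exp_add, ← Complex.exp_add]
    congr 1
    push_cast
    linear_combination (π*nn*(W/L)*((n:ℂ)-1/2)^2 + (2*(n:ℂ)-1)*π*J*(W/L) - 2*π*J*y/L
      - (2*(n:ℂ)-1)*π*nn*y/L) * Complex.I_sq

lemma st3_ofReal_exp4 (a b : ℝ) :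
    ((Real.exp a * Real.exp b * (Real.exp a * Real.exp b) : ℝ) : ℂ)
      = Complex.exp ((a:ℂ) + (b:ℂ) + ((a:ℂ) + (b:ℂ))) := by
  rw [← Real.exp_add, ← Real.exp_add, Complex.ofReal_exp]
  push_cast
  ring_nf

lemma st3_mRHS_eq (nn : ℕ) (L W : ℝ) (J y : ℝ) :
    mRHS nn L W J y
      = (L:ℂ) * ((∑' n : ℤ, ((st3gm nn L W J y n * st3gm nn L W J y n : ℝ) : ℂ))
        + ∑' n : ℤ, ((st3gp nn L W J y n * st3gp nn L W J y n : ℝ) : ℂ)) := by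
  rw [mRHS, jtheta2, jtheta2, ← tsum_mul_left, ← tsum_mul_left]
  unfold st3gp st3gm
  congr 1
  congr 1
  · apply tsum_congr
    intro n
    rw [st3cP, st3_ofReal_exp4, ← mul_assoc, ← Complex.exp_add, ← Complex.exp_add]
    congr 1
    push_cast
    linear_combination (2*π*nn*(W/L)*((n:ℂ)-1/2)^2 + 2*(2*(n:ℂ)-1)*π*J*(W/L)
      - 2*(2*(n:ℂ)-1)*π*nn*y/L) * Complex.I_sq
  · apply tsum_congr
    intro n
    rw [st3cP, st3_ofReal_exp4, ← mul_assoc, ← Complex.exp_add, ← Complex.exp_add]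
    congr 1
    push_cast
    linear_combination (2*π*nn*(W/L)*((n:ℂ)-1/2)^2 + 2*(2*(n:ℂ)-1)*π*J*(W/L)
      + 2*(2*(n:ℂ)-1)*π*nn*y/L) * Complex.I_sq

lemma st3_tsum_pair_zero (w v : ℤ → ℝ) (μ ν : ℤ → ℝ) (hnever : ∀ n m : ℤ, ¬(μ n = ν m)) :
    ∑' p : ℤ × ℤ, (if μ p.1 = ν p.2 then ((w p.1 * v p.2 : ℝ) : ℂ) else 0) = 0 :=
  (tsum_congr fun p => if_neg (hnever _ _)).trans tsum_zero

lemma st3_tsum_pair_diag (w v : ℤ → ℝ) (hw : Summable w) (hv : Summable v)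
    (hwpos : ∀ n, 0 ≤ w n) (hvpos : ∀ n, 0 ≤ v n) (μ ν : ℤ → ℝ)
    (hcond : ∀ n m : ℤ, (μ n = ν m) ↔ n = m) :
    ∑' p : ℤ × ℤ, (if μ p.1 = ν p.2 then ((w p.1 * v p.2 : ℝ) : ℂ) else 0)
      = ∑' n : ℤ, ((w n * v n : ℝ) : ℂ) := by
  have hfeq : (fun p : ℤ × ℤ => (if μ p.1 = ν p.2 then ((w p.1 * v p.2 : ℝ) : ℂ) else 0))
      = fun p => (if p.2 = p.1 then ((w p.1 * v p.1 : ℝ) : ℂ) else 0) := by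
    funext p
    by_cases h : p.2 = p.1
    · rw [if_pos h, if_pos ((hcond p.1 p.2).mpr h.symm), h]
    · rw [if_neg h, if_neg (fun hc => h ((hcond p.1 p.2).mp hc).symm)]
  rw [hfeq]
  have hsum : Summable fun p : ℤ × ℤ => (if p.2 = p.1 then ((w p.1 * v p.1 : ℝ) : ℂ) else 0) := by
    apply Summable.of_norm_bounded (g := fun p : ℤ × ℤ => w p.1 * v p.2)
      ((hw.mul_of_nonneg hv hwpos hvpos))
    intro p
    by_cases h : p.2 = p.1
    · rw [if_pos h, Complex.norm_real, Real.norm_eq_abs,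
        _root_.abs_of_nonneg (mul_nonneg (hwpos _) (hvpos _)), h]
    · rw [if_neg h, norm_zero]
      exact mul_nonneg (hwpos _) (hvpos _)
  rw [Summable.tsum_prod' hsum (fun n => (hasSum_ite_eq n ((w n * v n : ℝ) : ℂ)).summable)]
  exact tsum_congr fun n => (hasSum_ite_eq n ((w n * v n : ℝ) : ℂ)).tsum_eq

lemma st3_main (nn : ℕ) {L W : ℝ} (hL : 0 < L) (hW : 0 < W)
    {Jj Jk : ℝ} (hJj : 0 < Jj) (hJk : 0 < Jk) (hlt : Jj + Jk < nn)
    (d0 : ℤ) (hd0 : Jj - Jk = (d0:ℝ)) (s0 : ℤ) (hs0 : Jj + Jk = (s0:ℝ)) (y : ℝ) :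
    (∫ x in (0:ℝ)..L, (starRingEnd ℂ) (MC nn L W Jj (x + I*y)) * MC nn L W Jk (x + I*y))
      = if Jj = Jk then mRHS nn L W Jj y else 0 := by
  have hnnR : (0:ℝ) < (nn:ℝ) := by linarith
  have sjp := st3_summable_gp nn hL hW hnnR Jj y
  have sjm := st3_summable_gm nn hL hW hnnR Jj y
  have skp := st3_summable_gp nn hL hW hnnR Jk y
  have skm := st3_summable_gm nn hL hW hnnR Jk y
  have pjp := st3gp_nonneg nn L W Jj y
  have pjm := st3gm_nonneg nn L W Jj y
  have pkp := st3gp_nonneg nn L W Jk y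
  have pkm := st3gm_nonneg nn L W Jk y
  have cjp := st3_cont _ sjp pjp (st3fq nn Jj) L
  have cjm := st3_cont _ sjm pjm (fun n => -(st3fq nn Jj n)) L
  have ckp := st3_cont _ skp pkp (st3fq nn Jk) L
  have ckm := st3_cont _ skm pkm (fun n => -(st3fq nn Jk n)) L
  have hsplit : ∀ x : ℝ, (starRingEnd ℂ) (MC nn L W Jj (x + I*y)) * MC nn L W Jk (x + I*y)
      = (starRingEnd ℂ) (st3S (st3gp nn L W Jj y) (st3fq nn Jj) L x)
          * st3S (st3gp nn L W Jk y) (st3fq nn Jk) L x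
        - (starRingEnd ℂ) (st3S (st3gp nn L W Jj y) (st3fq nn Jj) L x)
          * st3S (st3gm nn L W Jk y) (fun n => -(st3fq nn Jk n)) L x
        - ((starRingEnd ℂ) (st3S (st3gm nn L W Jj y) (fun n => -(st3fq nn Jj n)) L x)
          * st3S (st3gp nn L W Jk y) (st3fq nn Jk) L x
        - (starRingEnd ℂ) (st3S (st3gm nn L W Jj y) (fun n => -(st3fq nn Jj n)) L x)
          * st3S (st3gm nn L W Jk y) (fun n => -(st3fq nn Jk n)) L x) := by
    intro x
    rw [st3_MC_eq nn hL Jj y x, st3_MC_eq nn hL Jk y x, map_sub]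
    ring
  simp only [hsplit]
  have i1 : IntervalIntegrable (fun x : ℝ =>
      (starRingEnd ℂ) (st3S (st3gp nn L W Jj y) (st3fq nn Jj) L x)
        * st3S (st3gp nn L W Jk y) (st3fq nn Jk) L x) volume 0 L :=
    (cjp.star.mul ckp).intervalIntegrable 0 L
  have i2 : IntervalIntegrable (fun x : ℝ =>
      (starRingEnd ℂ) (st3S (st3gp nn L W Jj y) (st3fq nn Jj) L x)
        * st3S (st3gm nn L W Jk y) (fun n => -(st3fq nn Jk n)) L x) volume 0 L :=
    (cjp.star.mul ckm).intervalIntegrable 0 L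
  have i3 : IntervalIntegrable (fun x : ℝ =>
      (starRingEnd ℂ) (st3S (st3gm nn L W Jj y) (fun n => -(st3fq nn Jj n)) L x)
        * st3S (st3gp nn L W Jk y) (st3fq nn Jk) L x) volume 0 L :=
    (cjm.star.mul ckp).intervalIntegrable 0 L
  have i4 : IntervalIntegrable (fun x : ℝ =>
      (starRingEnd ℂ) (st3S (st3gm nn L W Jj y) (fun n => -(st3fq nn Jj n)) L x)
        * st3S (st3gm nn L W Jk y) (fun n => -(st3fq nn Jk n)) L x) volume 0 L :=
    (cjm.star.mul ckm).intervalIntegrable 0 L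
  rw [intervalIntegral.integral_sub (i1.sub i2) (i3.sub i4),
    intervalIntegral.integral_sub i1 i2, intervalIntegral.integral_sub i3 i4]
  have hint_pp : ∀ n m : ℤ, ∃ d : ℤ, st3fq nn Jk m - st3fq nn Jj n = (d:ℝ) := fun n m =>
    ⟨-d0 + (m-n)*nn, by simp only [st3fq]; push_cast; linear_combination -hd0⟩
  have hint_pm : ∀ n m : ℤ, ∃ d : ℤ, -(st3fq nn Jk m) - st3fq nn Jj n = (d:ℝ) := fun n m =>
    ⟨-s0 + (1-n-m)*nn, by simp only [st3fq]; push_cast; linear_combination -hs0⟩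
  have hint_mp : ∀ n m : ℤ, ∃ d : ℤ, st3fq nn Jk m - (-(st3fq nn Jj n)) = (d:ℝ) := fun n m =>
    ⟨s0 + (n+m-1)*nn, by simp only [st3fq]; push_cast; linear_combination hs0⟩
  have hint_mm : ∀ n m : ℤ, ∃ d : ℤ, -(st3fq nn Jk m) - (-(st3fq nn Jj n)) = (d:ℝ) := fun n m =>
    ⟨d0 + (n-m)*nn, by simp only [st3fq]; push_cast; linear_combination hd0⟩
  rw [st3_key hL _ _ _ _ sjp skp pjp pkp hint_pp,
    st3_key hL _ _ _ _ sjp skm pjp pkm hint_pm,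
    st3_key hL _ _ _ _ sjm skp pjm pkp hint_mp,
    st3_key hL _ _ _ _ sjm skm pjm pkm hint_mm]
  have hsum_ne : ∀ n m : ℤ, st3fq nn Jj n + st3fq nn Jk m ≠ 0 := by
    intro n m h
    have hK : Jj + Jk = ((1 - n - m : ℤ):ℝ) * nn := by
      simp only [st3fq] at h
      push_cast
      linear_combination h
    have h1 : 0 < ((1 - n - m : ℤ):ℝ) * nn := by rw [← hK]; linarith
    have h2 : ((1 - n - m : ℤ):ℝ) * nn < 1 * nn := by rw [← hK]; linarith [one_mul (nn:ℝ)]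
    have h3 : 0 < ((1 - n - m : ℤ):ℝ) := by
      rcases le_or_gt ((1 - n - m : ℤ):ℝ) 0 with hh | hh
      · have := mul_nonpos_of_nonpos_of_nonneg hh hnnR.le
        linarith
      · exact hh
    have h4 : ((1 - n - m : ℤ):ℝ) < 1 := (mul_lt_mul_iff_left₀ hnnR).mp h2
    have h5 : (0:ℤ) < 1 - n - m := by exact_mod_cast h3
    have h6 : (1 - n - m : ℤ) < 1 := by exact_mod_cast h4
    omega
  have hpm : ∀ n m : ℤ, ¬(st3fq nn Jj n = -(st3fq nn Jk m)) := fun n m h =>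
    hsum_ne n m (by linarith)
  have hmp : ∀ n m : ℤ, ¬(-(st3fq nn Jj n) = st3fq nn Jk m) := fun n m h =>
    hsum_ne n m (by linarith)
  rw [st3_tsum_pair_zero _ _ _ _ hpm, st3_tsum_pair_zero _ _ _ _ hmp]
  by_cases hJ : Jj = Jk
  · subst hJ
    rw [if_pos rfl]
    have hdiag : ∀ n m : ℤ, (st3fq nn Jj n = st3fq nn Jj m) ↔ n = m := by
      intro n m
      constructor
      · intro h
        have h' : ((n:ℝ) - m) * nn = 0 := by
          simp only [st3fq] at h
          linear_combination h
        rcases mul_eq_zero.mp h' with h'' | h''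
        · have : (n:ℝ) = m := by linarith
          exact_mod_cast this
        · exact absurd h'' hnnR.ne'
      · rintro rfl; rfl
    have hdiag_neg : ∀ n m : ℤ, (-(st3fq nn Jj n) = -(st3fq nn Jj m)) ↔ n = m := by
      intro n m
      rw [neg_inj]
      exact hdiag n m
    rw [st3_tsum_pair_diag _ _ sjp sjp pjp pjp _ _ hdiag,
      st3_tsum_pair_diag _ _ sjm sjm pjm pjm _ _ hdiag_neg,
      st3_mRHS_eq]
    ring
  · rw [if_neg hJ]
    have hne : ∀ n m : ℤ, ¬(st3fq nn Jj n = st3fq nn Jk m) := by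
      intro n m h
      have hK : Jj - Jk = ((m - n : ℤ):ℝ) * nn := by
        simp only [st3fq] at h
        push_cast
        linear_combination h
      rcases lt_trichotomy (m - n : ℤ) 0 with hD | hD | hD
      · have hD' : (m - n : ℤ) ≤ -1 := by omega
        have hD'' : ((m - n : ℤ):ℝ) ≤ -1 := by exact_mod_cast hD'
        have h5 : ((m - n : ℤ):ℝ) * nn ≤ -1 * nn :=
          mul_le_mul_of_nonneg_right hD'' hnnR.le
        linarith
      · rw [hD] at hK
        simp only [Int.cast_zero, zero_mul] at hK
        exact hJ (by linarith)
      · have hD' : (1:ℤ) ≤ m - n := by omega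
        have hD'' : (1:ℝ) ≤ ((m - n : ℤ):ℝ) := by exact_mod_cast hD'
        have h5 : 1 * (nn:ℝ) ≤ ((m - n : ℤ):ℝ) * nn :=
          mul_le_mul_of_nonneg_right hD'' hnnR.le
        linarith
    have hne_neg : ∀ n m : ℤ, ¬(-(st3fq nn Jj n) = -(st3fq nn Jk m)) := fun n m h =>
      hne n m (neg_inj.mp h)
    rw [st3_tsum_pair_zero _ _ _ _ hne, st3_tsum_pair_zero _ _ _ _ hne_neg]
    ring

theorem statement3 (N : ℕ) (hN : 1 ≤ N) (L W : ℝ) (hL : 0 < L) (hW : 0 < W)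
    (j k : Fin N) (y : ℝ) :
    -- type C_N : 𝒩 = 2(N+1), J(j) = j
    ((∫ x in (0:ℝ)..L,
        conj (MC (2 * (N + 1)) L W ((j : ℕ) + 1) (x + I * y)) *
          MC (2 * (N + 1)) L W ((k : ℕ) + 1) (x + I * y))
      = if j = k then mRHS (2 * (N + 1)) L W ((j : ℕ) + 1) y else 0) ∧
    -- type C_N^∨ : 𝒩 = 2N, J(j) = j − 1/2
    ((∫ x in (0:ℝ)..L,
        conj (MC (2 * N) L W ((j : ℕ) + 1 / 2) (x + I * y)) *
          MC (2 * N) L W ((k : ℕ) + 1 / 2) (x + I * y))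
      = if j = k then mRHS (2 * N) L W ((j : ℕ) + 1 / 2) y else 0) ∧
    -- type BC_N : 𝒩 = 2N+1, J(j) = j
    ((∫ x in (0:ℝ)..L,
        conj (MC (2 * N + 1) L W ((j : ℕ) + 1) (x + I * y)) *
          MC (2 * N + 1) L W ((k : ℕ) + 1) (x + I * y))
      = if j = k then mRHS (2 * N + 1) L W ((j : ℕ) + 1) y else 0) := by
  have hjN : ((j:ℕ):ℝ) < N := by exact_mod_cast j.isLt
  have hkN : ((k:ℕ):ℝ) < N := by exact_mod_cast k.isLt
  have hjN1 : ((j:ℕ):ℝ) + 1 ≤ N := by exact_mod_cast Nat.succ_le_of_lt j.isLt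
  have hkN1 : ((k:ℕ):ℝ) + 1 ≤ N := by exact_mod_cast Nat.succ_le_of_lt k.isLt
  have hcond : ∀ (a : ℝ), ((((j:ℕ):ℝ) + a = ((k:ℕ):ℝ) + a) ↔ j = k) := by
    intro a
    constructor
    · intro h
      have : ((j:ℕ):ℝ) = ((k:ℕ):ℝ) := by linarith
      have : (j:ℕ) = (k:ℕ) := by exact_mod_cast this
      exact Fin.ext this
    · rintro rfl; rfl
  refine ⟨?_, ?_, ?_⟩
  · have H := st3_main (2*(N+1)) hL hW (Jj := ((j:ℕ):ℝ)+1) (Jk := ((k:ℕ):ℝ)+1)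
      (by positivity) (by positivity)
      (by push_cast; linarith)
      (((j:ℕ):ℤ) - ((k:ℕ):ℤ)) (by push_cast; ring)
      (((j:ℕ):ℤ) + ((k:ℕ):ℤ) + 2) (by push_cast; ring) y
    rw [H]
    by_cases hjk : j = k
    · rw [if_pos ((hcond 1).mpr hjk), if_pos hjk]
    · rw [if_neg (fun h => hjk ((hcond 1).mp h)), if_neg hjk]
  · have H := st3_main (2*N) hL hW (Jj := ((j:ℕ):ℝ)+1/2) (Jk := ((k:ℕ):ℝ)+1/2)
      (by positivity) (by positivity)
      (by push_cast; linarith)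
      (((j:ℕ):ℤ) - ((k:ℕ):ℤ)) (by push_cast; ring)
      (((j:ℕ):ℤ) + ((k:ℕ):ℤ) + 1) (by push_cast; ring) y
    rw [H]
    by_cases hjk : j = k
    · rw [if_pos ((hcond (1/2)).mpr hjk), if_pos hjk]
    · rw [if_neg (fun h => hjk ((hcond (1/2)).mp h)), if_neg hjk]
  · have H := st3_main (2*N+1) hL hW (Jj := ((j:ℕ):ℝ)+1) (Jk := ((k:ℕ):ℝ)+1)
      (by positivity) (by positivity)
      (by push_cast; linarith)
      (((j:ℕ):ℤ) - ((k:ℕ):ℤ)) (by push_cast; ring)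
      (((j:ℕ):ℤ) + ((k:ℕ):ℤ) + 2) (by push_cast; ring) y
    rw [H]
    by_cases hjk : j = k
    · rw [if_pos ((hcond 1).mpr hjk), if_pos hjk]
    · rw [if_neg (fun h => hjk ((hcond 1).mp h)), if_neg hjk]
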